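/- (Core of the lemma on translating S-rules, same-sign case, Heyting-algebra form.) In every Heyting algebra, for all elements a₁, a₂, h₁, h₂, with e := (a₁ ⇔ h₁)ᶜ ⊓ (a₂ ⇔ h₂)ᶜ, b₁ := ((h₁ ⊔ h₁ᶜ) ⊓ (a₂ ⊔ a₂ᶜ)) ⇨ (a₁ ⊔ h₂), and b₂ := ((a₁ ⊔ a₁ᶜ) ⊓ (h₂ ⊔ h₂ᶜ)) ⇨ (h₁ ⊔ a₂): e ⊓ (a₁ ⇔ a₂) ⊓ (h₁ ⇔ h₂) = e ⊓ b₁ ⊓ b₂. (Here aᵢ stands for the atom Aᵢ and hᵢ for its companion Âᵢ; the equality expresses that under the completeness constraints the translation tr_s of a synonymity rule A₁ ↔ A₂ is intuitionistically equivalent to the translation tr_d of the corresponding pair of D-rules.) -/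

import Mathlib

section Helpers

variable {α : Type*} [HeytingAlgebra α]

private lemma mp' {X a b : α} (h1 : X ≤ a ⇨ b) (h2 : X ≤ a) : X ≤ b :=
  (le_inf h1 h2).trans himp_inf_le

private lemma cases' {X u v t : α} (h : X ≤ u ⊔ v) (h1 : X ⊓ u ≤ t) (h2 : X ⊓ v ≤ t) :
    X ≤ t :=
  (le_inf le_rfl h).trans (by rw [inf_sup_left]; exact sup_le h1 h2)

private lemma absurd' {X a t : α} (h1 : X ≤ a) (h2 : X ≤ aᶜ) : X ≤ t :=
  ((le_inf h1 h2).trans disjoint_compl_right.le_bot).trans bot_le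

private lemma intro_compl {X a : α} (h : X ⊓ a ≤ ⊥) : X ≤ aᶜ := by
  rw [← himp_bot]; exact le_himp_iff.2 h

private lemma bi_le_himp {a b : α} : bihimp a b ≤ a ⇨ b := by
  rw [bihimp_def]; exact inf_le_right

private lemma bi_le_himp' {a b : α} : bihimp a b ≤ b ⇨ a := by
  rw [bihimp_def]; exact inf_le_left

private lemma bi_intro {X a b : α} (h1 : X ≤ a) (h2 : X ≤ b) : X ≤ bihimp a b :=
  (le_inf h1 h2).trans inf_le_bihimp

private lemma le_bihimp_old {a b c : α} (h1 : c ⊓ a ≤ b) (h2 : c ⊓ b ≤ a) :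
    c ≤ bihimp a b :=
  le_bihimp (by rw [inf_comm]; exact h2) (by rw [inf_comm]; exact h1)

private lemma bi_intro_neg {X a b : α} (h1 : X ≤ aᶜ) (h2 : X ≤ bᶜ) : X ≤ bihimp a b := by
  refine (le_inf h1 h2).trans (le_bihimp_old ?_ ?_)
  · exact ((inf_le_inf_right a inf_le_left).trans disjoint_compl_left.le_bot).trans bot_le
  · exact ((inf_le_inf_right b inf_le_right).trans disjoint_compl_left.le_bot).trans bot_le

end Helpers

/-- Core of the lemma on translating S-rules, same-sign case: under the
completeness constraints, tr_s of a synonymity rule A₁ ↔ A₂ is intuitionistically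
equivalent to tr_d of the corresponding pair of D-rules. -/
theorem srule_same_sign_heyting {α : Type*} [HeytingAlgebra α] (a₁ a₂ h₁ h₂ : α) :
    ((bihimp a₁ h₁)ᶜ ⊓ (bihimp a₂ h₂)ᶜ) ⊓ bihimp a₁ a₂ ⊓ bihimp h₁ h₂ =
      ((bihimp a₁ h₁)ᶜ ⊓ (bihimp a₂ h₂)ᶜ) ⊓
        (((h₁ ⊔ h₁ᶜ) ⊓ (a₂ ⊔ a₂ᶜ)) ⇨ (a₁ ⊔ h₂)) ⊓
        (((a₁ ⊔ a₁ᶜ) ⊓ (h₂ ⊔ h₂ᶜ)) ⇨ (h₁ ⊔ a₂)) := by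
  apply le_antisymm
  · -- L ≤ R
    set L := ((bihimp a₁ h₁)ᶜ ⊓ (bihimp a₂ h₂)ᶜ) ⊓ bihimp a₁ a₂ ⊓ bihimp h₁ h₂ with hL
    have hc1 : L ≤ (bihimp a₁ h₁)ᶜ := inf_le_left.trans (inf_le_left.trans inf_le_left)
    have hc2 : L ≤ (bihimp a₂ h₂)ᶜ := inf_le_left.trans (inf_le_left.trans inf_le_right)
    have h12 : L ≤ bihimp a₁ a₂ := inf_le_left.trans inf_le_right
    have hHH : L ≤ bihimp h₁ h₂ := inf_le_right
    refine le_inf (le_inf (le_inf hc1 hc2) ?_) ?_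
    · -- B1
      refine le_himp_iff.2 ?_
      set X := L ⊓ ((h₁ ⊔ h₁ᶜ) ⊓ (a₂ ⊔ a₂ᶜ)) with hX
      refine cases' (inf_le_right.trans (inf_le_left : _ ≤ h₁ ⊔ h₁ᶜ)) ?_ ?_
      · -- case h₁ : get h₂
        have : X ⊓ h₁ ≤ h₂ :=
          mp' (inf_le_left.trans (inf_le_left.trans (hHH.trans bi_le_himp))) inf_le_right
        exact this.trans le_sup_right
      · -- case h₁ᶜ
        set Y := X ⊓ h₁ᶜ with hY
        refine cases' (inf_le_left.trans (inf_le_right.trans (inf_le_right : _ ≤ a₂ ⊔ a₂ᶜ))) ?_ ?_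
        · -- case a₂ : get a₁
          have : Y ⊓ a₂ ≤ a₁ :=
            mp' (inf_le_left.trans (inf_le_left.trans (inf_le_left.trans (h12.trans bi_le_himp'))))
              inf_le_right
          exact this.trans le_sup_left
        · -- case a₂ᶜ : contradiction with c₂
          set Z := Y ⊓ a₂ᶜ with hZ
          have hZL : Z ≤ L := inf_le_left.trans (inf_le_left.trans inf_le_left)
          have hh2c : Z ≤ h₂ᶜ := by
            refine intro_compl ?_
            have hh1 : Z ⊓ h₂ ≤ h₁ :=
              mp' ((inf_le_left.trans hZL).trans (hHH.trans bi_le_himp')) inf_le_right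
            exact absurd' hh1 (inf_le_left.trans (inf_le_left.trans inf_le_right))
          exact absurd' (bi_intro_neg inf_le_right hh2c) (hZL.trans hc2)
    · -- B2
      refine le_himp_iff.2 ?_
      set X := L ⊓ ((a₁ ⊔ a₁ᶜ) ⊓ (h₂ ⊔ h₂ᶜ)) with hX
      refine cases' (inf_le_right.trans (inf_le_left : _ ≤ a₁ ⊔ a₁ᶜ)) ?_ ?_
      · have : X ⊓ a₁ ≤ a₂ :=
          mp' (inf_le_left.trans (inf_le_left.trans (h12.trans bi_le_himp))) inf_le_right
        exact this.trans le_sup_right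
      · set Y := X ⊓ a₁ᶜ with hY
        refine cases' (inf_le_left.trans (inf_le_right.trans (inf_le_right : _ ≤ h₂ ⊔ h₂ᶜ))) ?_ ?_
        · have : Y ⊓ h₂ ≤ h₁ :=
            mp' (inf_le_left.trans (inf_le_left.trans (inf_le_left.trans (hHH.trans bi_le_himp'))))
              inf_le_right
          exact this.trans le_sup_left
        · set Z := Y ⊓ h₂ᶜ with hZ
          have hZL : Z ≤ L := inf_le_left.trans (inf_le_left.trans inf_le_left)
          have hh1c : Z ≤ h₁ᶜ := by
            refine intro_compl ?_
            have hh2 : Z ⊓ h₁ ≤ h₂ :=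
              mp' ((inf_le_left.trans hZL).trans (hHH.trans bi_le_himp)) inf_le_right
            exact absurd' hh2 (inf_le_left.trans inf_le_right)
          exact absurd' (bi_intro_neg (inf_le_left.trans inf_le_right) hh1c) (hZL.trans hc1)
  · -- R ≤ L
    set R := ((bihimp a₁ h₁)ᶜ ⊓ (bihimp a₂ h₂)ᶜ) ⊓
        (((h₁ ⊔ h₁ᶜ) ⊓ (a₂ ⊔ a₂ᶜ)) ⇨ (a₁ ⊔ h₂)) ⊓
        (((a₁ ⊔ a₁ᶜ) ⊓ (h₂ ⊔ h₂ᶜ)) ⇨ (h₁ ⊔ a₂)) with hR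
    have hc1 : R ≤ (bihimp a₁ h₁)ᶜ := inf_le_left.trans (inf_le_left.trans inf_le_left)
    have hc2 : R ≤ (bihimp a₂ h₂)ᶜ := inf_le_left.trans (inf_le_left.trans inf_le_right)
    have hB1 : R ≤ ((h₁ ⊔ h₁ᶜ) ⊓ (a₂ ⊔ a₂ᶜ)) ⇨ (a₁ ⊔ h₂) := inf_le_left.trans inf_le_right
    have hB2 : R ≤ ((a₁ ⊔ a₁ᶜ) ⊓ (h₂ ⊔ h₂ᶜ)) ⇨ (h₁ ⊔ a₂) := inf_le_right
    refine le_inf (le_inf (le_inf hc1 hc2) ?_) ?_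
    · -- bihimp a₁ a₂
      refine le_bihimp_old ?_ ?_
      · -- R ⊓ a₁ ≤ a₂
        set X := R ⊓ a₁ with hX
        have hxa1 : X ≤ a₁ := inf_le_right
        have hh1c : X ≤ h₁ᶜ :=
          intro_compl (absurd' (bi_intro (inf_le_left.trans hxa1) inf_le_right)
            (inf_le_left.trans (inf_le_left.trans hc1)))
        have hh2c : X ≤ h₂ᶜ := by
          refine intro_compl ?_
          set Y := X ⊓ h₂ with hY
          have hsup : Y ≤ h₁ ⊔ a₂ :=
            mp' ((inf_le_left.trans inf_le_left).trans hB2)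
              (le_inf ((inf_le_left.trans hxa1).trans le_sup_left) (inf_le_right.trans le_sup_left))
          refine cases' hsup ?_ ?_
          · exact absurd' inf_le_right ((inf_le_left.trans (inf_le_left.trans hh1c)))
          · exact absurd' (bi_intro inf_le_right (inf_le_left.trans inf_le_right))
              (inf_le_left.trans (inf_le_left.trans (inf_le_left.trans hc2)))
        have hsup : X ≤ h₁ ⊔ a₂ :=
          mp' (inf_le_left.trans hB2)
            (le_inf (hxa1.trans le_sup_left) (hh2c.trans le_sup_right))
        refine cases' hsup ?_ ?_
        · exact absurd' inf_le_right (inf_le_left.trans hh1c)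
        · exact inf_le_right
      · -- R ⊓ a₂ ≤ a₁
        set X := R ⊓ a₂ with hX
        have hxa2 : X ≤ a₂ := inf_le_right
        have hh2c : X ≤ h₂ᶜ :=
          intro_compl (absurd' (bi_intro (inf_le_left.trans hxa2) inf_le_right)
            (inf_le_left.trans (inf_le_left.trans hc2)))
        have hh1c : X ≤ h₁ᶜ := by
          refine intro_compl ?_
          set Y := X ⊓ h₁ with hY
          have hsup : Y ≤ a₁ ⊔ h₂ :=
            mp' ((inf_le_left.trans inf_le_left).trans hB1)
              (le_inf (inf_le_right.trans le_sup_left) ((inf_le_left.trans hxa2).trans le_sup_left))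
          refine cases' hsup ?_ ?_
          · exact absurd' (bi_intro inf_le_right (inf_le_left.trans inf_le_right))
              (inf_le_left.trans (inf_le_left.trans (inf_le_left.trans hc1)))
          · exact absurd' inf_le_right (inf_le_left.trans (inf_le_left.trans hh2c))
        have hsup : X ≤ a₁ ⊔ h₂ :=
          mp' (inf_le_left.trans hB1)
            (le_inf (hh1c.trans le_sup_right) (hxa2.trans le_sup_left))
        refine cases' hsup ?_ ?_
        · exact inf_le_right
        · exact absurd' inf_le_right (inf_le_left.trans hh2c)
    · -- bihimp h₁ h₂
      refine le_bihimp_old ?_ ?_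
      · -- R ⊓ h₁ ≤ h₂
        set X := R ⊓ h₁ with hX
        have hxh1 : X ≤ h₁ := inf_le_right
        have ha1c : X ≤ a₁ᶜ :=
          intro_compl (absurd' (bi_intro inf_le_right (inf_le_left.trans hxh1))
            (inf_le_left.trans (inf_le_left.trans hc1)))
        have ha2c : X ≤ a₂ᶜ := by
          refine intro_compl ?_
          set Y := X ⊓ a₂ with hY
          have hsup : Y ≤ a₁ ⊔ h₂ :=
            mp' ((inf_le_left.trans inf_le_left).trans hB1)
              (le_inf ((inf_le_left.trans hxh1).trans le_sup_left) (inf_le_right.trans le_sup_left))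
          refine cases' hsup ?_ ?_
          · exact absurd' inf_le_right (inf_le_left.trans (inf_le_left.trans ha1c))
          · exact absurd' (bi_intro (inf_le_left.trans inf_le_right) inf_le_right)
              (inf_le_left.trans (inf_le_left.trans (inf_le_left.trans hc2)))
        have hsup : X ≤ a₁ ⊔ h₂ :=
          mp' (inf_le_left.trans hB1)
            (le_inf (hxh1.trans le_sup_left) (ha2c.trans le_sup_right))
        refine cases' hsup ?_ ?_
        · exact absurd' inf_le_right (inf_le_left.trans ha1c)
        · exact inf_le_right
      · -- R ⊓ h₂ ≤ h₁
        set X := R ⊓ h₂ with hX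
        have hxh2 : X ≤ h₂ := inf_le_right
        have ha2c : X ≤ a₂ᶜ :=
          intro_compl (absurd' (bi_intro inf_le_right (inf_le_left.trans hxh2))
            (inf_le_left.trans (inf_le_left.trans hc2)))
        have ha1c : X ≤ a₁ᶜ := by
          refine intro_compl ?_
          set Y := X ⊓ a₁ with hY
          have hsup : Y ≤ h₁ ⊔ a₂ :=
            mp' ((inf_le_left.trans inf_le_left).trans hB2)
              (le_inf (inf_le_right.trans le_sup_left) ((inf_le_left.trans hxh2).trans le_sup_left))
          refine cases' hsup ?_ ?_
          · exact absurd' (bi_intro (inf_le_left.trans inf_le_right) inf_le_right)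
              (inf_le_left.trans (inf_le_left.trans (inf_le_left.trans hc1)))
          · exact absurd' inf_le_right (inf_le_left.trans (inf_le_left.trans ha2c))
        have hsup : X ≤ h₁ ⊔ a₂ :=
          mp' (inf_le_left.trans hB2)
            (le_inf (ha1c.trans le_sup_right) (hxh2.trans le_sup_left))
        refine cases' hsup ?_ ?_
        · exact inf_le_right
        · exact absurd' inf_le_right (inf_le_left.trans ha2c)
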